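/- arXiv:1805.02748 — 2 statements merged into one kernel-verified Lean document; each statement's English description precedes it below -/
import Mathlib

section
/- Fix k, l < ω and ordinals ε_0 ≥ … ≥ ε_l, let P be a tree with rank(P) = ω^{ω^{ε_0}}·…·ω^{ω^{ε_l}}, and let f : Λ_2(P) → {0,…,k} be a function. Suppose Q is a subtree of P with rank(Q) = rank(P) and F : {0,…,l} → {0,…,k} is a function such that for every (s,t) ∈ Λ_2(Q) one has ς_Q(s,t) = ς_P(s,t) and F(ς_Q(s,t)) = f(s,t). Then for every j ≤ k, setting A = {i ≤ l : F(i) = j} and α = ω^{ω^{ε_0}·1_A(0)}·…·ω^{ω^{ε_l}·1_A(l)} (with α = 1 if A = ∅), there exists a subtree R of P with rank(R) = α such that f(s,t) = j for all (s,t) ∈ Λ_2(R). -/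
open Ordinal Set

universe u

/-- The set of maximal elements ("leaves") of `P`. -/
def treeLeaves {α : Type u} [PartialOrder α] (P : Set α) : Set α :=
  {t ∈ P | ∀ s ∈ P, ¬ t < s}

/-- The derivative `P' = P \ Leaves P`. -/
def treeDeriv {α : Type u} [PartialOrder α] (P : Set α) : Set α :=
  P \ treeLeaves P

/-- The transfinite iterated derivative `P^ξ`. -/
noncomputable def derivIter {α : Type u} [PartialOrder α] (P : Set α) (ξ : Ordinal.{u}) :
    Set α :=
  Ordinal.limitRecOn ξ P (fun _ ih => treeDeriv ih)
    (fun o _ ih => ⋂ (ζ : Set.Iio o), ih ζ.1 ζ.2)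

/-- `P` is a tree: every ancestor set is well-ordered (a well-founded chain). -/
def IsTree {α : Type u} [PartialOrder α] (P : Set α) : Prop :=
  ∀ t ∈ P, IsChain (· ≤ ·) {s ∈ P | s ≤ t} ∧ {s ∈ P | s ≤ t}.WellFoundedOn (· < ·)

/-- `P` is well-founded: some transfinite derivative is empty. -/
def IsWFTree {α : Type u} [PartialOrder α] (P : Set α) : Prop :=
  ∃ ξ : Ordinal.{u}, derivIter P ξ = ∅

/-- The rank of a well-founded tree: the least `ξ` with `P^ξ = ∅`. -/
noncomputable def treeRank {α : Type u} [PartialOrder α] (P : Set α) : Ordinal.{u} :=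
  sInf {ξ | derivIter P ξ = ∅}

/-- `τ_P(t)`: the largest ordinal `ξ` with `t ∈ P^ξ`. -/
noncomputable def treeTau {α : Type u} [PartialOrder α] (P : Set α) (t : α) : Ordinal.{u} :=
  sSup {ξ | t ∈ derivIter P ξ}

/-- `τ_{P,β}(t)`: the largest ordinal `ξ` with `t ∈ P^{β·ξ}`. -/
noncomputable def treeTauMul {α : Type u} [PartialOrder α] (P : Set α) (β : Ordinal.{u})
    (t : α) : Ordinal.{u} :=
  sSup {ξ | t ∈ derivIter P (β * ξ)}

/-- `alpProd ε i = ω^{ω^{ε 0}} · ⋯ · ω^{ω^{ε i}}`. -/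
noncomputable def alpProd (ε : ℕ → Ordinal.{u}) : ℕ → Ordinal.{u}
  | 0 => omega0 ^ omega0 ^ ε 0
  | (i + 1) => alpProd ε i * omega0 ^ omega0 ^ ε (i + 1)

/-- The separation function `ς_P` of a tree whose rank has decomposition
`ω^{ω^{ε 0}} ⋯ ω^{ω^{ε l}}`: the least `i` such that `s, t` lie in the same block
`P^{α_i·δ} \ P^{α_i·(δ+1)}` for some ordinal `δ`. -/
noncomputable def sep {α : Type u} [PartialOrder α] (P : Set α) (ε : ℕ → Ordinal.{u})
    (s t : α) : ℕ :=
  sInf {i : ℕ | ∃ δ : Ordinal.{u},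
    s ∈ derivIter P (alpProd ε i * δ) \ derivIter P (alpProd ε i * (δ + 1)) ∧
    t ∈ derivIter P (alpProd ε i * δ) \ derivIter P (alpProd ε i * (δ + 1))}

/-- `indProd ε A l = ω^{ω^{ε 0}·1_A(0)} ⋯ ω^{ω^{ε l}·1_A(l)}`. -/
noncomputable def indProd (ε : ℕ → Ordinal.{u}) (A : Set ℕ) : ℕ → Ordinal.{u}
  | 0 => omega0 ^ (omega0 ^ ε 0 * A.indicator (fun _ => (1 : Ordinal.{u})) 0)
  | (i + 1) => indProd ε A i *
      omega0 ^ (omega0 ^ ε (i + 1) * A.indicator (fun _ => (1 : Ordinal.{u})) (i + 1))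

/-- `sumPow ε i = ω^{ε 0} + ⋯ + ω^{ε (i-1)}` (the partial sums `γ_i`). -/
noncomputable def sumPow (ε : ℕ → Ordinal.{u}) : ℕ → Ordinal.{u}
  | 0 => 0
  | (i + 1) => sumPow ε i + omega0 ^ ε i

/-- `indSum ε A i = Σ_{n < i} 1_A(n)·ω^{ε n}`. -/
noncomputable def indSum (ε : ℕ → Ordinal.{u}) (A : Set ℕ) : ℕ → Ordinal.{u}
  | 0 => 0
  | (i + 1) => indSum ε A i + A.indicator (fun _ => (1 : Ordinal.{u})) i * omega0 ^ ε i



section DerivBasics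

variable {α : Type u} [PartialOrder α]

theorem treeDeriv_subset (P : Set α) : treeDeriv P ⊆ P := Set.diff_subset

@[simp] theorem derivIter_zero (P : Set α) : derivIter P 0 = P :=
  Ordinal.limitRecOn_zero _ _ _

theorem derivIter_succ (P : Set α) (ξ : Ordinal.{u}) :
    derivIter P (ξ + 1) = treeDeriv (derivIter P ξ) := by
  rw [derivIter, Ordinal.add_one_eq_succ, Ordinal.limitRecOn_succ]
  rfl

theorem derivIter_limit (P : Set α) {o : Ordinal.{u}} (ho : Order.IsSuccLimit o) :
    derivIter P o = ⋂ (ζ : Set.Iio o), derivIter P ζ.1 := by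
  rw [derivIter, Ordinal.limitRecOn_limit _ _ _ _ ho]
  rfl

theorem derivIter_antitone (P : Set α) {ζ ξ : Ordinal.{u}} (h : ζ ≤ ξ) :
    derivIter P ξ ⊆ derivIter P ζ := by
  induction ξ using Ordinal.induction with
  | h ξ ih =>
    rcases Ordinal.zero_or_succ_or_isSuccLimit ξ with h0 | ⟨a, ha⟩ | hl
    · subst h0; rw [nonpos_iff_eq_zero.mp h]
    · subst ha
      rcases (Order.le_succ_iff_eq_or_le.mp h) with rfl | hle
      · rfl
      · rw [← Ordinal.add_one_eq_succ, derivIter_succ]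
        exact (treeDeriv_subset _).trans (ih a (Order.lt_succ a) hle)
    · rcases eq_or_lt_of_le h with rfl | hlt
      · rfl
      · rw [derivIter_limit P hl]
        exact Set.iInter_subset_of_subset ⟨ζ, hlt⟩ le_rfl.subset

theorem derivIter_subset (P : Set α) (ξ : Ordinal.{u}) : derivIter P ξ ⊆ P := by
  simpa using derivIter_antitone P (zero_le : (0 : Ordinal.{u}) ≤ ξ)

end DerivBasics
section Tau

variable {α : Type u} [PartialOrder α]

/-- The level of `t` in `Q`: the largest `ξ` with `t ∈ Q^ξ` (for `t ∈ Q`, `Q` well-founded). -/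
noncomputable def tauQ (Q : Set α) (t : α) : Ordinal.{u} :=
  Ordinal.pred (sInf {ξ : Ordinal.{u} | t ∉ derivIter Q ξ})

theorem tauQ_spec {Q : Set α} (hwf : ∃ ξ : Ordinal.{u}, derivIter Q ξ = ∅)
    {t : α} (ht : t ∈ Q) (ξ : Ordinal.{u}) :
    t ∈ derivIter Q ξ ↔ ξ ≤ tauQ Q t := by
  obtain ⟨ξ₀, hξ₀⟩ := hwf
  set S : Set Ordinal.{u} := {ξ | t ∉ derivIter Q ξ} with hS
  have hSne : S.Nonempty := ⟨ξ₀, by simp [hS, hξ₀]⟩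
  have hmem : sInf S ∈ S := csInf_mem hSne
  have h0 : sInf S ≠ 0 := by
    intro h
    rw [h, hS] at hmem
    exact hmem (by simpa using ht)
  have hnl : ¬ Order.IsSuccLimit (sInf S) := by
    intro hl
    apply hmem
    rw [derivIter_limit Q hl]
    refine Set.mem_iInter.mpr fun ζ => ?_
    by_contra hc
    exact absurd (csInf_le' (show ζ.1 ∈ S from hc)) (not_le.mpr ζ.2)
  obtain ⟨τ, hτ⟩ : ∃ τ, sInf S = Order.succ τ := by
    rcases Ordinal.zero_or_succ_or_isSuccLimit (sInf S) with h | h | h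
    · exact absurd h h0
    · exact h.imp fun _ h => h.symm
    · exact absurd h hnl
  have htau : tauQ Q t = τ := by rw [tauQ, ← hS, hτ, Ordinal.pred_succ]
  rw [htau]
  constructor
  · intro hmemξ
    by_contra hc
    have : sInf S ≤ ξ := by rw [hτ, Order.succ_le_iff]; exact not_le.mp hc
    exact hmem (derivIter_antitone Q this hmemξ)
  · intro hle
    by_contra hc
    have := csInf_le' (show ξ ∈ S from hc)
    rw [hτ, Order.succ_le_iff] at this
    exact absurd hle (not_le.mpr this)

theorem tauQ_lt_rank {Q : Set α} {γ : Ordinal.{u}} (hγ : derivIter Q γ = ∅)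
    {t : α} (ht : t ∈ Q) : tauQ Q t < γ := by
  by_contra hc
  have := (tauQ_spec ⟨γ, hγ⟩ ht γ).mpr (not_lt.mp hc)
  rw [hγ] at this
  exact this

/-- Derived sets are downward closed along `<` within `Q`. -/
theorem mem_derivIter_of_lt {Q : Set α} {s t : α} (hs : s ∈ Q) (hst : s < t) :
    ∀ ξ : Ordinal.{u}, t ∈ derivIter Q ξ → s ∈ derivIter Q ξ := by
  intro ξ
  induction ξ using Ordinal.induction with
  | h ξ ih =>
    rcases Ordinal.zero_or_succ_or_isSuccLimit ξ with h0 | ⟨a, ha⟩ | hl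
    · subst h0; simpa using fun _ => hs
    · subst ha
      rw [← Ordinal.add_one_eq_succ, derivIter_succ]
      intro htm
      have hta : t ∈ derivIter Q a := treeDeriv_subset _ htm
      have hsa : s ∈ derivIter Q a := ih a (Order.lt_succ a) hta
      exact ⟨hsa, fun hleaf => hleaf.2 t hta hst⟩
    · rw [derivIter_limit Q hl]
      intro htm
      rw [Set.mem_iInter] at htm ⊢
      exact fun ζ => ih ζ.1 ζ.2 (htm ζ)

theorem tauQ_lt_tauQ {Q : Set α} (hwf : ∃ ξ : Ordinal.{u}, derivIter Q ξ = ∅)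
    {s t : α} (hs : s ∈ Q) (ht : t ∈ Q) (hst : s < t) :
    tauQ Q t < tauQ Q s := by
  have h1 : t ∈ derivIter Q (tauQ Q t) := (tauQ_spec hwf ht _).mpr le_rfl
  have h2 : s ∈ derivIter Q (tauQ Q t) := mem_derivIter_of_lt hs hst _ h1
  have h3 : s ∈ derivIter Q (tauQ Q t + 1) := by
    rw [derivIter_succ]
    exact ⟨h2, fun hleaf => hleaf.2 t h1 hst⟩
  have := (tauQ_spec hwf hs _).mp h3
  exact lt_of_lt_of_le (lt_add_one _) this

/-- Every level below `tauQ t` is realized strictly above `t`. -/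
theorem exists_tauQ_eq_above {Q : Set α} (hwf : ∃ ξ : Ordinal.{u}, derivIter Q ξ = ∅) :
    ∀ o : Ordinal.{u}, ∀ t ∈ Q, tauQ Q t = o → ∀ ζ < o, ∃ s ∈ Q, t < s ∧ tauQ Q s = ζ := by
  intro o
  induction o using Ordinal.induction with
  | h o ih =>
    intro t ht hto ζ hζ
    have h1 : t ∈ derivIter Q (ζ + 1) := by
      rw [tauQ_spec hwf ht, hto, Ordinal.add_one_eq_succ, Order.succ_le_iff]; exact hζ
    rw [derivIter_succ] at h1
    obtain ⟨h2, h3⟩ := h1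
    have h4 : ∃ s ∈ derivIter Q ζ, t < s := by
      by_contra hc
      push_neg at hc
      exact h3 ⟨h2, fun s hsm hts => (hc s hsm) hts⟩
    obtain ⟨s, hsm, hts⟩ := h4
    have hsQ : s ∈ Q := derivIter_subset Q ζ hsm
    have hζs : ζ ≤ tauQ Q s := (tauQ_spec hwf hsQ ζ).mp hsm
    rcases eq_or_lt_of_le hζs with heq | hlt
    · exact ⟨s, hsQ, hts, heq.symm⟩
    · have hso : tauQ Q s < o := hto ▸ tauQ_lt_tauQ hwf ht hsQ hts
      obtain ⟨s', hs'Q, hss', hs'τ⟩ := ih _ hso s hsQ rfl ζ hlt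
      exact ⟨s', hs'Q, hts.trans hss', hs'τ⟩

end Tau
section Arith

variable (ε : ℕ → Ordinal.{u}) (A : Set ℕ)

theorem ordDiv_mono {a b c : Ordinal.{u}} (h : a ≤ b) : a / c ≤ b / c := by
  rcases eq_or_ne c 0 with rfl | hc
  · simp
  · by_contra hcon
    push_neg at hcon
    have h2 : b < c * (a / c) := (Ordinal.div_lt hc).mp hcon
    exact absurd (h.trans_lt h2) (not_lt.mpr (Ordinal.mul_div_le a c))

theorem alpProd_ne_zero : ∀ i, alpProd ε i ≠ 0
  | 0 => opow_ne_zero _ omega0_ne_zero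
  | (i + 1) => _root_.mul_ne_zero (alpProd_ne_zero i) (opow_ne_zero _ omega0_ne_zero)

theorem indProd_ne_zero : ∀ i, indProd ε A i ≠ 0
  | 0 => opow_ne_zero _ omega0_ne_zero
  | (i + 1) => _root_.mul_ne_zero (indProd_ne_zero i) (opow_ne_zero _ omega0_ne_zero)

theorem indicator_le_one (i : ℕ) : A.indicator (fun _ => (1 : Ordinal.{u})) i ≤ 1 := by
  by_cases h : i ∈ A <;> simp [Set.indicator, h]

theorem indFactor_le (i : ℕ) :
    omega0 ^ (omega0 ^ ε i * A.indicator (fun _ => (1 : Ordinal.{u})) i) ≤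
      omega0 ^ omega0 ^ ε i := by
  apply opow_le_opow_right omega0_pos
  calc omega0 ^ ε i * A.indicator (fun _ => (1 : Ordinal.{u})) i
      ≤ omega0 ^ ε i * 1 := mul_le_mul_right (indicator_le_one A i) _
    _ = omega0 ^ ε i := mul_one _

theorem indProd_le_alpProd : ∀ i, indProd ε A i ≤ alpProd ε i
  | 0 => indFactor_le ε A 0
  | (i + 1) => mul_le_mul' (indProd_le_alpProd i) (indFactor_le ε A (i + 1))

theorem alpProd_factor {m i : ℕ} (h : m ≤ i) :
    ∃ ρ : Ordinal.{u}, ρ ≠ 0 ∧ alpProd ε i = alpProd ε m * ρ := by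
  induction i, h using Nat.le_induction with
  | base => exact ⟨1, one_ne_zero, (mul_one _).symm⟩
  | succ i hmi ih =>
    obtain ⟨ρ, hρ, hfac⟩ := ih
    exact ⟨ρ * omega0 ^ omega0 ^ ε (i + 1),
      _root_.mul_ne_zero hρ (opow_ne_zero _ omega0_ne_zero),
      by rw [alpProd, hfac, mul_assoc]⟩

theorem indProd_factor {m i : ℕ} (h : m ≤ i) :
    ∃ σ : Ordinal.{u}, σ ≠ 0 ∧ indProd ε A i = indProd ε A m * σ := by
  induction i, h using Nat.le_induction with
  | base => exact ⟨1, one_ne_zero, (mul_one _).symm⟩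
  | succ i hmi ih =>
    obtain ⟨σ, hσ, hfac⟩ := ih
    exact ⟨σ * omega0 ^ (omega0 ^ ε (i + 1) * A.indicator (fun _ => (1 : Ordinal.{u})) (i + 1)),
      _root_.mul_ne_zero hσ (opow_ne_zero _ omega0_ne_zero),
      by rw [indProd, hfac, mul_assoc]⟩

theorem indProd_succ_of_not_mem {i : ℕ} (h : (i + 1) ∉ A) :
    indProd ε A (i + 1) = indProd ε A i := by
  rw [indProd, Set.indicator_of_notMem h, mul_zero, opow_zero, mul_one]

theorem indProd_zero_of_not_mem (h : 0 ∉ A) : indProd ε A 0 = 1 := by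
  rw [indProd, Set.indicator_of_notMem h, mul_zero, opow_zero]

/-- The order embedding of `Iio (indProd ε A i)` into `Iio (alpProd ε i)`. -/
noncomputable def hFun : ℕ → Ordinal.{u} → Ordinal.{u}
  | 0, ν => ν
  | (i + 1), ν => alpProd ε i * (ν / indProd ε A i) + hFun i (ν % indProd ε A i)

theorem hFun_lt : ∀ i, ∀ ν < indProd ε A i, hFun ε A i ν < alpProd ε i
  | 0, ν, hν => lt_of_lt_of_le hν (indProd_le_alpProd ε A 0)
  | (i + 1), ν, hν => by
    have hβ : indProd ε A i ≠ 0 := indProd_ne_zero ε A i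
    set q := ν / indProd ε A i with hq
    set r := ν % indProd ε A i with hr
    have hqlt : q < omega0 ^ (omega0 ^ ε (i + 1) * A.indicator (fun _ => (1 : Ordinal.{u})) (i + 1)) := by
      rw [hq, Ordinal.div_lt hβ]
      exact hν
    have hqc : q < omega0 ^ omega0 ^ ε (i + 1) := lt_of_lt_of_le hqlt (indFactor_le ε A (i + 1))
    have hrlt : hFun ε A i r < alpProd ε i := hFun_lt i r (Ordinal.mod_lt ν hβ)
    show alpProd ε i * q + hFun ε A i r < alpProd ε (i + 1)
    calc alpProd ε i * q + hFun ε A i r < alpProd ε i * q + alpProd ε i :=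
          add_lt_add_right hrlt _
      _ = alpProd ε i * (q + 1) := by rw [mul_add, mul_one]
      _ ≤ alpProd ε i * omega0 ^ omega0 ^ ε (i + 1) := by
          apply mul_le_mul_right
          rw [Ordinal.add_one_eq_succ, Order.succ_le_iff]
          exact hqc
      _ = alpProd ε (i + 1) := rfl

theorem hFun_strictMono : ∀ i, ∀ ν' ν : Ordinal.{u}, ν' < ν → ν < indProd ε A i →
    hFun ε A i ν' < hFun ε A i ν
  | 0, ν', ν, h, _ => h
  | (i + 1), ν', ν, h, hν => by
    have hβ : indProd ε A i ≠ 0 := indProd_ne_zero ε A i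
    have hqle : ν' / indProd ε A i ≤ ν / indProd ε A i :=
      ordDiv_mono h.le
    show alpProd ε i * (ν' / indProd ε A i) + hFun ε A i (ν' % indProd ε A i) <
      alpProd ε i * (ν / indProd ε A i) + hFun ε A i (ν % indProd ε A i)
    rcases eq_or_lt_of_le hqle with heq | hlt
    · have hrlt : ν' % indProd ε A i < ν % indProd ε A i := by
        have h1 := Ordinal.div_add_mod ν' (indProd ε A i)
        have h2 := Ordinal.div_add_mod ν (indProd ε A i)
        rw [← h1, ← h2, heq] at h
        exact (add_lt_add_iff_left _).mp h
      rw [heq]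
      exact add_lt_add_right
        (hFun_strictMono i _ _ hrlt (Ordinal.mod_lt ν hβ)) _
    · calc alpProd ε i * (ν' / indProd ε A i) + hFun ε A i (ν' % indProd ε A i)
          < alpProd ε i * (ν' / indProd ε A i) + alpProd ε i :=
            add_lt_add_right (hFun_lt ε A i _ (Ordinal.mod_lt ν' hβ)) _
        _ = alpProd ε i * (ν' / indProd ε A i + 1) := by rw [mul_add, mul_one]
        _ ≤ alpProd ε i * (ν / indProd ε A i) := by
            apply mul_le_mul_right
            rw [Ordinal.add_one_eq_succ, Order.succ_le_iff]
            exact hlt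
        _ ≤ alpProd ε i * (ν / indProd ε A i) + hFun ε A i (ν % indProd ε A i) :=
            le_self_add

theorem hFun_mono {i : ℕ} {ν' ν : Ordinal.{u}} (h : ν' ≤ ν) (hν : ν < indProd ε A i) :
    hFun ε A i ν' ≤ hFun ε A i ν := by
  rcases eq_or_lt_of_le h with rfl | hlt
  · exact le_rfl
  · exact (hFun_strictMono ε A i _ _ hlt hν).le

/-- division uniqueness helper -/
theorem mulAdd_eq_iff {ρ q q' x x' : Ordinal.{u}} (hρ : ρ ≠ 0) (hx : x < ρ) (hx' : x' < ρ) :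
    ρ * q + x = ρ * q' + x' ↔ q = q' ∧ x = x' := by
  constructor
  · intro h
    have hq : q = q' := by
      have h1 : (ρ * q + x) / ρ = q := by
        rw [Ordinal.mul_add_div _ hρ, Ordinal.div_eq_zero_of_lt hx, add_zero]
      have h2 : (ρ * q' + x') / ρ = q' := by
        rw [Ordinal.mul_add_div _ hρ, Ordinal.div_eq_zero_of_lt hx', add_zero]
      rw [← h1, ← h2, h]
    refine ⟨hq, ?_⟩
    rw [hq] at h
    exact (add_right_inj _).mp h
  · rintro ⟨rfl, rfl⟩; rfl

/-- Key quotient-compatibility: `hFun` respects digit blocks. -/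
theorem hFun_quot : ∀ i, ∀ m ≤ i, ∀ ν' ν : Ordinal.{u}, ν' < indProd ε A i →
    ν < indProd ε A i →
    (hFun ε A i ν / alpProd ε m = hFun ε A i ν' / alpProd ε m ↔
      ν / indProd ε A m = ν' / indProd ε A m)
  | 0, m, hm, ν', ν, hν', hν => by
    interval_cases m
    have b1 : hFun ε A 0 ν / alpProd ε 0 = 0 :=
      Ordinal.div_eq_zero_of_lt (hFun_lt ε A 0 ν hν)
    have b2 : hFun ε A 0 ν' / alpProd ε 0 = 0 :=
      Ordinal.div_eq_zero_of_lt (hFun_lt ε A 0 ν' hν')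
    have c1 : ν / indProd ε A 0 = 0 := Ordinal.div_eq_zero_of_lt hν
    have c2 : ν' / indProd ε A 0 = 0 := Ordinal.div_eq_zero_of_lt hν'
    rw [b1, b2, c1, c2]
  | (i + 1), m, hm, ν', ν, hν', hν => by
    rcases Nat.lt_or_ge m (i + 1) with hmi | hmi
    · -- m ≤ i
      have hm' : m ≤ i := Nat.lt_succ_iff.mp hmi
      have hβ : indProd ε A i ≠ 0 := indProd_ne_zero ε A i
      have hαm : alpProd ε m ≠ 0 := alpProd_ne_zero ε m
      have hβm : indProd ε A m ≠ 0 := indProd_ne_zero ε A m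
      obtain ⟨ρ, hρ, hαfac⟩ := alpProd_factor ε hm'
      obtain ⟨σ, hσ, hβfac⟩ := indProd_factor ε A hm'
      set q := ν / indProd ε A i
      set r := ν % indProd ε A i
      set q' := ν' / indProd ε A i
      set r' := ν' % indProd ε A i
      have hr : r < indProd ε A i := Ordinal.mod_lt ν hβ
      have hr' : r' < indProd ε A i := Ordinal.mod_lt ν' hβ
      have hx : hFun ε A i r / alpProd ε m < ρ := by
        rw [Ordinal.div_lt hαm, ← hαfac]
        exact hFun_lt ε A i r hr
      have hx' : hFun ε A i r' / alpProd ε m < ρ := by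
        rw [Ordinal.div_lt hαm, ← hαfac]
        exact hFun_lt ε A i r' hr'
      have hy : r / indProd ε A m < σ := by
        rw [Ordinal.div_lt hβm, ← hβfac]
        exact hr
      have hy' : r' / indProd ε A m < σ := by
        rw [Ordinal.div_lt hβm, ← hβfac]
        exact hr'
      have keyα : ∀ w u : Ordinal.{u}, (alpProd ε i * w + u) / alpProd ε m =
          ρ * w + u / alpProd ε m := by
        intro w u
        rw [hαfac, mul_assoc, Ordinal.mul_add_div _ hαm]
      have keyβ : ∀ w u : Ordinal.{u}, (indProd ε A i * w + u) / indProd ε A m =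
          σ * w + u / indProd ε A m := by
        intro w u
        rw [hβfac, mul_assoc, Ordinal.mul_add_div _ hβm]
      have lhs1 : hFun ε A (i + 1) ν / alpProd ε m = ρ * q + hFun ε A i r / alpProd ε m := by
        show (alpProd ε i * q + hFun ε A i r) / alpProd ε m = _
        exact keyα q (hFun ε A i r)
      have lhs2 : hFun ε A (i + 1) ν' / alpProd ε m = ρ * q' + hFun ε A i r' / alpProd ε m := by
        show (alpProd ε i * q' + hFun ε A i r') / alpProd ε m = _
        exact keyα q' (hFun ε A i r')
      have rhs1 : ν / indProd ε A m = σ * q + r / indProd ε A m := by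
        conv_lhs => rw [← Ordinal.div_add_mod ν (indProd ε A i)]
        exact keyβ q r
      have rhs2 : ν' / indProd ε A m = σ * q' + r' / indProd ε A m := by
        conv_lhs => rw [← Ordinal.div_add_mod ν' (indProd ε A i)]
        exact keyβ q' r'
      rw [lhs1, lhs2, rhs1, rhs2, mulAdd_eq_iff hρ hx hx', mulAdd_eq_iff hσ hy hy',
        hFun_quot i m hm' r' r hr' hr]
    · -- m = i + 1
      have : m = i + 1 := le_antisymm hm hmi
      subst this
      have b1 : hFun ε A (i+1) ν / alpProd ε (i+1) = 0 :=
        Ordinal.div_eq_zero_of_lt (hFun_lt ε A (i+1) ν hν)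
      have b2 : hFun ε A (i+1) ν' / alpProd ε (i+1) = 0 :=
        Ordinal.div_eq_zero_of_lt (hFun_lt ε A (i+1) ν' hν')
      have c1 : ν / indProd ε A (i+1) = 0 := Ordinal.div_eq_zero_of_lt hν
      have c2 : ν' / indProd ε A (i+1) = 0 := Ordinal.div_eq_zero_of_lt hν'
      rw [b1, b2, c1, c2]

end Arith
section Block

variable {α : Type u} [PartialOrder α]

theorem mem_block_iff {Q : Set α} (hwf : ∃ ξ : Ordinal.{u}, derivIter Q ξ = ∅)
    {u : α} (hu : u ∈ Q) {β : Ordinal.{u}} (hβ : β ≠ 0) (δ : Ordinal.{u}) :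
    u ∈ derivIter Q (β * δ) \ derivIter Q (β * (δ + 1)) ↔ tauQ Q u / β = δ := by
  constructor
  · rintro ⟨h1, h2⟩
    have hle : β * δ ≤ tauQ Q u := (tauQ_spec hwf hu _).mp h1
    have hlt : tauQ Q u < β * (δ + 1) := by
      by_contra hc
      push_neg at hc
      exact h2 ((tauQ_spec hwf hu _).mpr hc)
    apply le_antisymm
    · have h3 : tauQ Q u / β < δ + 1 := (Ordinal.div_lt hβ).mpr hlt
      rwa [Ordinal.add_one_eq_succ, Order.lt_succ_iff] at h3
    · exact (Ordinal.le_div hβ).mpr hle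
  · rintro rfl
    refine ⟨(tauQ_spec hwf hu _).mpr (Ordinal.mul_div_le _ _), fun h2 => ?_⟩
    have h4 : β * (tauQ Q u / β + 1) ≤ tauQ Q u := (tauQ_spec hwf hu _).mp h2
    have h3 : tauQ Q u / β < tauQ Q u / β + 1 := lt_add_one _
    rw [Ordinal.div_lt hβ] at h3
    exact absurd h4 (not_le.mpr h3)

theorem block_iff {Q : Set α} (hwf : ∃ ξ : Ordinal.{u}, derivIter Q ξ = ∅)
    {s t : α} (hs : s ∈ Q) (ht : t ∈ Q) {β : Ordinal.{u}} (hβ : β ≠ 0) :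
    (∃ δ : Ordinal.{u}, s ∈ derivIter Q (β * δ) \ derivIter Q (β * (δ + 1)) ∧
      t ∈ derivIter Q (β * δ) \ derivIter Q (β * (δ + 1))) ↔
    tauQ Q s / β = tauQ Q t / β := by
  constructor
  · rintro ⟨δ, h1, h2⟩
    rw [(mem_block_iff hwf hs hβ δ).mp h1, (mem_block_iff hwf ht hβ δ).mp h2]
  · intro h
    exact ⟨tauQ Q t / β, (mem_block_iff hwf hs hβ _).mpr h,
      (mem_block_iff hwf ht hβ _).mpr rfl⟩

end Block

/-- Sharpness, part (i): with `Q` and `F` as in the main theorem,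
for each color `j` there is a subtree `R` of `P` of rank
`ω^{ω^{ε_0}·1_A(0)}⋯ω^{ω^{ε_l}·1_A(l)}` (where `A = {i ≤ l : F(i) = j}`) on which
all pairs receive color `j`. -/
theorem statement1 {α : Type u} [PartialOrder α] (P : Set α) (hP : IsTree P)
    (hWF : IsWFTree P) (k l : ℕ) (ε : ℕ → Ordinal.{u}) (hε : ∀ i < l, ε (i + 1) ≤ ε i)
    (hrank : treeRank P = alpProd ε l) (f : α → α → Fin (k + 1))
    (Q : Set α) (hQP : Q ⊆ P) (F : Fin (l + 1) → Fin (k + 1))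
    (hQrank : treeRank Q = treeRank P)
    (hQ : ∀ s ∈ Q, ∀ t ∈ Q, s < t →
      sep Q ε s t = sep P ε s t ∧
      ∃ h : sep Q ε s t < l + 1, F ⟨sep Q ε s t, h⟩ = f s t)
    (j : Fin (k + 1)) :
    ∃ R ⊆ P, treeRank R = indProd ε {i : ℕ | ∃ h : i < l + 1, F ⟨i, h⟩ = j} l ∧
      ∀ s ∈ R, ∀ t ∈ R, s < t → f s t = j := by
  classical
  set A : Set ℕ := {i : ℕ | ∃ h : i < l + 1, F ⟨i, h⟩ = j} with hA
  set γ : Ordinal.{u} := alpProd ε l with hγdef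
  set αA : Ordinal.{u} := indProd ε A l with hαAdef
  have hQγ : treeRank Q = γ := hQrank.trans hrank
  have hγ0 : γ ≠ 0 := alpProd_ne_zero ε l
  -- basic rank facts about Q
  have hSne : {ξ : Ordinal.{u} | derivIter Q ξ = ∅}.Nonempty := by
    by_contra hcon
    rw [Set.not_nonempty_iff_eq_empty] at hcon
    rw [treeRank, hcon, Ordinal.sInf_empty] at hQγ
    exact hγ0 hQγ.symm
  have hwfQ : ∃ ξ : Ordinal.{u}, derivIter Q ξ = ∅ := hSne
  have hQempty : derivIter Q γ = ∅ := by
    have h := csInf_mem hSne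
    rw [← treeRank, hQγ] at h
    exact h
  have hQne : ∀ ζ < γ, derivIter Q ζ ≠ ∅ := by
    intro ζ hζ hemp
    have : treeRank Q ≤ ζ := csInf_le' hemp
    rw [hQγ] at this
    exact absurd hζ (not_lt.mpr this)
  have htauγ : ∀ t ∈ Q, tauQ Q t < γ := fun t ht => tauQ_lt_rank hQempty ht
  -- realizing every level below γ
  have hexists : ∀ ζ < γ, ∃ t ∈ Q, tauQ Q t = ζ := by
    intro ζ hζ
    obtain ⟨t₀, ht₀⟩ := Set.nonempty_iff_ne_empty.mpr (hQne ζ hζ)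
    have ht₀Q : t₀ ∈ Q := derivIter_subset Q ζ ht₀
    have hle : ζ ≤ tauQ Q t₀ := (tauQ_spec hwfQ ht₀Q ζ).mp ht₀
    rcases eq_or_lt_of_le hle with heq | hlt
    · exact ⟨t₀, ht₀Q, heq.symm⟩
    · obtain ⟨s, hsQ, _, hsτ⟩ := exists_tauQ_eq_above hwfQ (tauQ Q t₀) t₀ ht₀Q rfl ζ hlt
      exact ⟨s, hsQ, hsτ⟩
  -- the homogeneous subtree
  set R : Set α := {t : α | t ∈ Q ∧ ∃ μ : Ordinal.{u}, μ < αA ∧ tauQ Q t = hFun ε A l μ}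
    with hR
  have hRQ : R ⊆ Q := fun t ht => ht.1
  have hRsub : ∀ ξ : Ordinal.{u}, derivIter R ξ ⊆ R := fun ξ => derivIter_subset R ξ
  have hmono : ∀ {μ' μ : Ordinal.{u}}, μ' ≤ μ → μ < αA →
      hFun ε A l μ' ≤ hFun ε A l μ := fun h hμ => hFun_mono ε A h hμ
  have hltiff : ∀ {μ' μ : Ordinal.{u}}, μ' < αA → μ < αA →
      (hFun ε A l μ' < hFun ε A l μ ↔ μ' < μ) := by
    intro μ' μ hμ' hμ
    constructor
    · intro h
      by_contra hc
      exact absurd (hmono (not_lt.mp hc) hμ') (not_le.mpr h)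
    · intro h
      exact hFun_strictMono ε A l μ' μ h hμ
  have hinj : ∀ {μ' μ : Ordinal.{u}}, μ' < αA → μ < αA →
      hFun ε A l μ' = hFun ε A l μ → μ' = μ := by
    intro μ' μ hμ' hμ h
    by_contra hc
    rcases lt_or_gt_of_ne hc with hlt | hlt
    · exact absurd h (ne_of_lt (hFun_strictMono ε A l _ _ hlt hμ))
    · exact absurd h.symm (ne_of_lt (hFun_strictMono ε A l _ _ hlt hμ'))
  -- D1: lower bound on derivatives of R
  have D1 : ∀ ξ : Ordinal.{u}, ∀ t ∈ Q, ∀ μ : Ordinal.{u}, ξ ≤ μ → μ < αA →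
      tauQ Q t = hFun ε A l μ → t ∈ derivIter R ξ := by
    intro ξ
    induction ξ using Ordinal.induction with
    | h ξ ih =>
      intro t ht μ hξμ hμ htau
      rcases Ordinal.zero_or_succ_or_isSuccLimit ξ with rfl | ⟨a, rfl⟩ | hl
      · rw [derivIter_zero]
        exact ⟨ht, μ, hμ, htau⟩
      · rw [← Ordinal.add_one_eq_succ, derivIter_succ]
        have haμ : a < μ := Order.succ_le_iff.mp hξμ
        have hta : t ∈ derivIter R a := ih a (Order.lt_succ a) t ht μ haμ.le hμ htau
        have hha : hFun ε A l a < tauQ Q t := by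
          rw [htau]
          exact hFun_strictMono ε A l a μ haμ hμ
        obtain ⟨s, hsQ, hts, hsτ⟩ :=
          exists_tauQ_eq_above hwfQ (tauQ Q t) t ht rfl _ hha
        have hsR : s ∈ derivIter R a :=
          ih a (Order.lt_succ a) s hsQ a le_rfl (haμ.trans hμ) hsτ
        exact ⟨hta, fun hleaf => hleaf.2 s hsR hts⟩
      · rw [derivIter_limit R hl]
        exact Set.mem_iInter.mpr fun ζ =>
          ih ζ.1 ζ.2 t ht μ (le_of_lt (lt_of_lt_of_le ζ.2 hξμ)) hμ htau
  -- D2: upper bound on derivatives of R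
  have D2 : ∀ ξ : Ordinal.{u}, ∀ t ∈ derivIter R ξ,
      ∃ μ : Ordinal.{u}, ξ ≤ μ ∧ μ < αA ∧ tauQ Q t = hFun ε A l μ := by
    intro ξ
    induction ξ using Ordinal.induction with
    | h ξ ih =>
      intro t htm
      rcases Ordinal.zero_or_succ_or_isSuccLimit ξ with rfl | ⟨a, rfl⟩ | hl
      · rw [derivIter_zero] at htm
        obtain ⟨_, μ, hμ, htau⟩ := htm
        exact ⟨μ, (zero_le : (0 : Ordinal.{u}) ≤ μ), hμ, htau⟩
      · rw [← Ordinal.add_one_eq_succ, derivIter_succ] at htm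
        obtain ⟨hta, hnl⟩ := htm
        have hex : ∃ s ∈ derivIter R a, t < s := by
          by_contra hc
          push_neg at hc
          exact hnl ⟨hta, fun s hsm hts => (hc s hsm) hts⟩
        obtain ⟨s, hsm, hts⟩ := hex
        obtain ⟨μs, haμs, hμs, hsτ⟩ := ih a (Order.lt_succ a) s hsm
        obtain ⟨μt, _, hμt, htτ⟩ := ih a (Order.lt_succ a) t hta
        have htQ : t ∈ Q := (hRsub a hta).1
        have hsQ : s ∈ Q := (hRsub a hsm).1
        have htlt : tauQ Q s < tauQ Q t := tauQ_lt_tauQ hwfQ htQ hsQ hts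
        refine ⟨μt, ?_, hμt, htτ⟩
        rw [Order.succ_le_iff]
        by_contra hc
        push_neg at hc
        have h1 : hFun ε A l μt ≤ hFun ε A l μs := hmono (hc.trans haμs) hμs
        rw [← htτ, ← hsτ] at h1
        exact absurd htlt (not_lt.mpr h1)
      · rw [derivIter_limit R hl] at htm
        rw [Set.mem_iInter] at htm
        have ht0 : t ∈ R := by
          have := htm ⟨0, hl.pos⟩
          rwa [derivIter_zero] at this
        obtain ⟨_, μt, hμt, htτ⟩ := ht0
        refine ⟨μt, ?_, hμt, htτ⟩
        by_contra hc
        push_neg at hc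
        have hsucc : Order.succ μt < ξ := hl.succ_lt hc
        obtain ⟨μ', hμ'1, hμ'2, hμ'3⟩ := ih _ hsucc t (htm ⟨_, hsucc⟩)
        have heqμ : μ' = μt := (hinj hμt hμ'2 (htτ.symm.trans hμ'3)).symm
        rw [heqμ] at hμ'1
        exact absurd hμ'1 (not_le.mpr (Order.lt_succ μt))
  refine ⟨R, fun t ht => hQP (hRQ ht), ?_, ?_⟩
  · -- rank computation
    have hRempty : derivIter R αA = ∅ := by
      rw [Set.eq_empty_iff_forall_notMem]
      intro t htm
      obtain ⟨μ, h1, h2, _⟩ := D2 αA t htm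
      exact absurd h2 (not_lt.mpr h1)
    have hRne : ∀ ξ < αA, derivIter R ξ ≠ ∅ := by
      intro ξ hξ
      have hhξ : hFun ε A l ξ < γ := hFun_lt ε A l ξ hξ
      obtain ⟨t, htQ, htτ⟩ := hexists _ hhξ
      have := D1 ξ t htQ ξ le_rfl hξ htτ
      exact Set.nonempty_iff_ne_empty.mp ⟨t, this⟩
    rw [treeRank]
    apply le_antisymm
    · exact csInf_le' hRempty
    · apply le_csInf ⟨αA, hRempty⟩
      intro b hb
      by_contra hc
      push_neg at hc
      exact hRne b hc hb
  · -- homogeneity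
    intro s hs t ht hst
    obtain ⟨hsQ, μs, hμs, hτs⟩ := hs
    obtain ⟨htQ, μt, hμt, hτt⟩ := ht
    have htταυ : tauQ Q t < tauQ Q s := tauQ_lt_tauQ hwfQ hsQ htQ hst
    have hμts : μt < μs := by
      rw [← hltiff hμt hμs, ← hτs, ← hτt]
      exact htταυ
    -- the separation index
    set T : Set ℕ := {m : ℕ | μs / indProd ε A m = μt / indProd ε A m} with hT
    have hlT : l ∈ T := by
      show μs / indProd ε A l = μt / indProd ε A l
      rw [Ordinal.div_eq_zero_of_lt hμs, Ordinal.div_eq_zero_of_lt hμt]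
    have hTne : T.Nonempty := ⟨l, hlT⟩
    set m₀ : ℕ := sInf T with hm₀def
    have hm₀T : m₀ ∈ T := Nat.sInf_mem hTne
    have hm₀l : m₀ ≤ l := Nat.sInf_le hlT
    have hm₀A : m₀ ∈ A := by
      by_contra hcon
      cases hm0 : m₀ with
      | zero =>
        have h1 : indProd ε A 0 = 1 := indProd_zero_of_not_mem ε A (hm0 ▸ hcon)
        have h2 := hm₀T
        rw [hT, Set.mem_setOf_eq, hm0, h1, Ordinal.div_one, Ordinal.div_one] at h2
        exact absurd h2 (ne_of_gt hμts)
      | succ n =>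
        have h1 : indProd ε A (n + 1) = indProd ε A n :=
          indProd_succ_of_not_mem ε A (hm0 ▸ hcon)
        have h2 := hm₀T
        rw [hT, Set.mem_setOf_eq, hm0, h1] at h2
        have h3 : n ∈ T := h2
        have := Nat.sInf_le h3
        omega
    -- identify the separation function
    have hquot : ∀ i ≤ l,
        (tauQ Q s / alpProd ε i = tauQ Q t / alpProd ε i ↔
          μs / indProd ε A i = μt / indProd ε A i) := by
      intro i hi
      rw [hτs, hτt]
      exact hFun_quot ε A l i hi μt μs hμt hμs
    have hsep : sep Q ε s t = m₀ := by
      have hm₀mem : m₀ ∈ {i : ℕ | ∃ δ : Ordinal.{u},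
          s ∈ derivIter Q (alpProd ε i * δ) \ derivIter Q (alpProd ε i * (δ + 1)) ∧
          t ∈ derivIter Q (alpProd ε i * δ) \ derivIter Q (alpProd ε i * (δ + 1))} := by
        rw [Set.mem_setOf_eq, block_iff hwfQ hsQ htQ (alpProd_ne_zero ε m₀)]
        exact (hquot m₀ hm₀l).mpr hm₀T
      apply le_antisymm
      · exact Nat.sInf_le hm₀mem
      · apply le_csInf ⟨m₀, hm₀mem⟩
        intro b hb
        by_contra hc
        push_neg at hc
        rw [Set.mem_setOf_eq, block_iff hwfQ hsQ htQ (alpProd_ne_zero ε b)] at hb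
        have hbl : b ≤ l := le_of_lt (lt_of_lt_of_le hc hm₀l)
        have hbT : b ∈ T := (hquot b hbl).mp hb
        exact absurd (Nat.sInf_le hbT) (not_le.mpr hc)
    obtain ⟨-, hlt2, hF⟩ := hQ s hsQ t htQ hst
    obtain ⟨hm₀lt, hFj⟩ := hm₀A
    rw [← hF]
    have hfin : (⟨sep Q ε s t, hlt2⟩ : Fin (l + 1)) = ⟨m₀, hm₀lt⟩ := Fin.val_inj.mp hsep
    rw [hfin]
    exact hFj
end

section
/- Let P be a well-founded tree. (a) If rank(P) ≥ β, then rank(P \ P^β) = β. (b) If β, γ are ordinals and t ∈ P^{β+γ}, then for every ordinal ζ one has [P(t) ∩ (P^β \ P^{β+γ})]^ζ = P(t) ∩ (P^{β+ζ} \ P^{β+γ}), and rank(P(t) ∩ (P^β \ P^{β+γ})) = γ. -/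
open Ordinal Set

universe u

namespace Statement11Aux

variable {α : Type u} [PartialOrder α] {P Q : Set α}

theorem derivIter_zero (P : Set α) : derivIter P 0 = P :=
  Ordinal.limitRecOn_zero _ _ _

theorem derivIter_succ (P : Set α) (ξ : Ordinal.{u}) :
    derivIter P (Order.succ ξ) = treeDeriv (derivIter P ξ) :=
  Ordinal.limitRecOn_succ _ _ _ _

theorem derivIter_succ' (P : Set α) (ξ : Ordinal.{u}) :
    derivIter P (ξ + 1) = treeDeriv (derivIter P ξ) := by
  rw [Ordinal.add_one_eq_succ, derivIter_succ]

theorem derivIter_limit (P : Set α) {ξ : Ordinal.{u}} (h : Order.IsSuccLimit ξ) :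
    derivIter P ξ = ⋂ (ζ : Set.Iio ξ), derivIter P ζ.1 :=
  Ordinal.limitRecOn_limit _ _ _ _ h

theorem mem_treeDeriv {s : α} : s ∈ treeDeriv Q ↔ s ∈ Q ∧ ∃ u ∈ Q, s < u := by
  constructor
  · rintro ⟨hs, h⟩
    refine ⟨hs, ?_⟩
    by_contra hc
    exact h ⟨hs, fun u hu hlt => hc ⟨u, hu, hlt⟩⟩
  · rintro ⟨hs, u, hu, hlt⟩
    exact ⟨hs, fun hleaf => hleaf.2 u hu hlt⟩

theorem treeDeriv_subset (Q : Set α) : treeDeriv Q ⊆ Q := Set.diff_subset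

theorem derivIter_anti (P : Set α) : ∀ {ξ ζ : Ordinal.{u}}, ζ ≤ ξ →
    derivIter P ξ ⊆ derivIter P ζ := by
  intro ξ
  induction ξ using Ordinal.limitRecOn with
  | zero => intro ζ hζ; rw [nonpos_iff_eq_zero.mp hζ]
  | add_one ξ ih =>
    intro ζ hζ
    rcases eq_or_lt_of_le hζ with rfl | hlt
    · exact fun _ h => h
    · have h2 : ζ ≤ ξ := Order.lt_succ_iff.mp hlt
      rw [derivIter_succ']
      exact (treeDeriv_subset _).trans (ih h2)
  | limit ξ hlim ih =>
    intro ζ hζ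
    rcases eq_or_lt_of_le hζ with rfl | hlt
    · exact fun _ h => h
    · rw [derivIter_limit P hlim]
      exact Set.iInter_subset (fun ζ' : Set.Iio ξ => derivIter P ζ'.1) ⟨ζ, hlt⟩

theorem derivIter_subset (P : Set α) (ξ : Ordinal.{u}) : derivIter P ξ ⊆ P := by
  have := derivIter_anti P (zero_le (a := ξ))
  rwa [derivIter_zero] at this

/-- Lemma A: anything in `P` strictly below an element of `P^ξ` lies in `P^{ξ+1}`. -/
theorem memA (P : Set α) : ∀ (ξ : Ordinal.{u}), ∀ s u : α, s ∈ P → u ∈ derivIter P ξ →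
    s < u → s ∈ derivIter P (ξ + 1) := by
  intro ξ
  induction ξ using Ordinal.limitRecOn with
  | zero =>
    intro s u hs hu hlt
    rw [derivIter_zero] at hu
    rw [zero_add, show (1:Ordinal.{u}) = 0 + 1 from (zero_add 1).symm, derivIter_succ',
      derivIter_zero, mem_treeDeriv]
    exact ⟨hs, u, hu, hlt⟩
  | add_one ξ ih =>
    intro s u hs hu hlt
    have hu' : u ∈ derivIter P ξ := by
      rw [derivIter_succ'] at hu; exact treeDeriv_subset _ hu
    have hs' : s ∈ derivIter P (ξ + 1) := ih s u hs hu' hlt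
    rw [Ordinal.add_one_eq_succ] at hs'
    rw [derivIter_succ', mem_treeDeriv]
    exact ⟨hs', u, hu, hlt⟩
  | limit ξ hlim ih =>
    intro s u hs hu hlt
    rw [derivIter_succ', mem_treeDeriv]
    refine ⟨?_, u, hu, hlt⟩
    rw [derivIter_limit P hlim, Set.mem_iInter]
    rintro ⟨η, hη⟩
    have huη : u ∈ derivIter P η := derivIter_anti P hη.le hu
    exact derivIter_anti P (le_add_right (le_refl η)) (ih η hη s u hs huη hlt)
    

/-- `ν s`: the least `η` with `s ∉ P^η`. -/
noncomputable def nuOrd (P : Set α) (s : α) : Ordinal.{u} :=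
  sInf {η | s ∉ derivIter P η}

theorem nu_nonempty (hWF : IsWFTree P) (s : α) : {η | s ∉ derivIter P η}.Nonempty := by
  obtain ⟨ξ, hξ⟩ := hWF
  exact ⟨ξ, by simp [hξ]⟩

theorem not_mem_nu (hWF : IsWFTree P) (s : α) : s ∉ derivIter P (nuOrd P s) :=
  csInf_mem (nu_nonempty hWF s)

theorem mem_iff_lt_nu (hWF : IsWFTree P) {s : α} {η : Ordinal.{u}} :
    s ∈ derivIter P η ↔ η < nuOrd P s := by
  constructor
  · intro hs
    by_contra h
    push_neg at h
    exact not_mem_nu hWF s (derivIter_anti P h hs)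
  · intro h
    by_contra hs
    exact absurd (csInf_le' (by exact hs)) (not_le.mpr h)

theorem nu_succ (hWF : IsWFTree P) {s : α} (hs : s ∈ P) :
    ∃ r, nuOrd P s = r + 1 := by
  rcases Ordinal.zero_or_succ_or_isSuccLimit (nuOrd P s) with h0 | ⟨r, hr⟩ | hlim
  · exfalso
    have : s ∈ derivIter P 0 := by rwa [derivIter_zero]
    rw [mem_iff_lt_nu hWF, h0] at this
    exact absurd this (lt_irrefl 0)
  · exact ⟨r, by rw [← hr, Ordinal.add_one_eq_succ]⟩
  · exfalso
    apply not_mem_nu hWF s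
    rw [derivIter_limit P hlim, Set.mem_iInter]
    rintro ⟨η, hη⟩
    exact (mem_iff_lt_nu hWF).mpr hη

theorem nu_lt_nu (hWF : IsWFTree P) {s u : α} (hs : s ∈ P) (hu : u ∈ P)
    (hlt : s < u) : nuOrd P u < nuOrd P s := by
  obtain ⟨r, hr⟩ := nu_succ hWF hu
  have hur : u ∈ derivIter P r := by
    rw [mem_iff_lt_nu hWF, hr]; exact by rw [Ordinal.add_one_eq_succ]; exact Order.lt_succ r
  have := memA P r s u hs hur hlt
  rw [mem_iff_lt_nu hWF] at this
  rwa [hr]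

/-- Claim C: below any element of `P^{ξ+1}` sits an element of exact level `ξ`. -/
theorem exC (hWF : IsWFTree P) (ξ : Ordinal.{u}) {s : α}
    (hs : s ∈ derivIter P (ξ + 1)) :
    ∃ u, s < u ∧ u ∈ derivIter P ξ ∧ u ∉ derivIter P (ξ + 1) := by
  have key : ∀ o : Ordinal.{u}, ∀ s : α, nuOrd P s ≤ o → ∀ ξ : Ordinal.{u},
      s ∈ derivIter P (ξ + 1) →
      ∃ u, s < u ∧ u ∈ derivIter P ξ ∧ u ∉ derivIter P (ξ + 1) := by
    intro o
    induction o using Ordinal.induction with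
    | h o IH =>
      intro s hso ξ hs
      rw [derivIter_succ', mem_treeDeriv] at hs
      obtain ⟨hsξ, u, hu, hlt⟩ := hs
      by_cases hu1 : u ∈ derivIter P (ξ + 1)
      · have hsP : s ∈ P := derivIter_subset P ξ hsξ
        have huP : u ∈ P := derivIter_subset P ξ hu
        have hnu : nuOrd P u < o := lt_of_lt_of_le (nu_lt_nu hWF hsP huP hlt) hso
        obtain ⟨w, hw1, hw2, hw3⟩ := IH (nuOrd P u) hnu u le_rfl ξ hu1
        exact ⟨w, hlt.trans hw1, hw2, hw3⟩
      · exact ⟨u, hlt, hu, hu1⟩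
  exact key (nuOrd P s) s le_rfl ξ hs


/-- Derivative of a block `A ∩ (P^δ \ P^μ)` for `A ⊆ P` upward closed in `P`. -/
theorem block_deriv (hWF : IsWFTree P) {A : Set α} (hAP : A ⊆ P)
    (hA : ∀ ⦃s u : α⦄, s ∈ A → s < u → u ∈ P → u ∈ A) (δ μ : Ordinal.{u}) :
    treeDeriv (A ∩ (derivIter P δ \ derivIter P μ)) =
      A ∩ (derivIter P (δ + 1) \ derivIter P μ) := by
  ext s
  rw [mem_treeDeriv]
  constructor
  · rintro ⟨⟨hsA, hsδ, hsμ⟩, u, ⟨huA, huδ, huμ⟩, hlt⟩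
    exact ⟨hsA, memA P δ s u (hAP hsA) huδ hlt, hsμ⟩
  · rintro ⟨hsA, hsδ1, hsμ⟩
    have hδμ : δ + 1 < μ := by
      by_contra h
      push_neg at h
      exact hsμ (derivIter_anti P h hsδ1)
    obtain ⟨u, hlt, huδ, huδ1⟩ := exC hWF δ hsδ1
    have huP : u ∈ P := derivIter_subset P δ huδ
    have huμ : u ∉ derivIter P μ := fun h => huδ1 (derivIter_anti P hδμ.le h)
    exact ⟨⟨hsA, derivIter_anti P (le_add_right (le_refl δ)) hsδ1, hsμ⟩,
      u, ⟨hA hsA hlt huP, huδ, huμ⟩, hlt⟩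

/-- Main formula: iterated derivatives of a block. -/
theorem main_formula (hWF : IsWFTree P) {A : Set α} (hAP : A ⊆ P)
    (hA : ∀ ⦃s u : α⦄, s ∈ A → s < u → u ∈ P → u ∈ A) (β μ : Ordinal.{u}) :
    ∀ ζ : Ordinal.{u}, derivIter (A ∩ (derivIter P β \ derivIter P μ)) ζ =
      A ∩ (derivIter P (β + ζ) \ derivIter P μ) := by
  intro ζ
  induction ζ using Ordinal.limitRecOn with
  | zero => rw [derivIter_zero, add_zero]
  | add_one ζ ih =>
    rw [derivIter_succ', ih, block_deriv hWF hAP hA, ← add_assoc]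
  | limit ζ hlim ih =>
    rw [derivIter_limit _ hlim]
    ext x
    rw [Set.mem_iInter]
    constructor
    · intro h
      have h0 : x ∈ A ∩ (derivIter P (β + 0) \ derivIter P μ) := by
        rw [← ih 0 hlim.pos]
        exact h ⟨0, hlim.pos⟩
      obtain ⟨hxA, hxβ, hxμ⟩ := h0
      rw [add_zero] at hxβ
      refine ⟨hxA, ?_, hxμ⟩
      rw [derivIter_limit P (Ordinal.isSuccLimit_add β hlim), Set.mem_iInter]
      rintro ⟨ρ, hρ⟩
      rcases lt_or_ge ρ β with h1 | h1
      · exact derivIter_anti P h1.le hxβ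
      · have hsub : ρ - β < ζ := by
          have : β + (ρ - β) < β + ζ := by rwa [Ordinal.add_sub_cancel_of_le h1]
          exact (add_lt_add_iff_left β).mp this
        have := h ⟨ρ - β, hsub⟩
        rw [ih _ hsub] at this
        have := this.2.1
        rwa [Ordinal.add_sub_cancel_of_le h1] at this
    · rintro ⟨hxA, hxβζ, hxμ⟩ ⟨η, hη⟩
      rw [ih η hη]
      refine ⟨hxA, derivIter_anti P ?_ hxβζ, hxμ⟩
      exact (add_le_add_iff_left β).mpr hη.le


theorem treeRank_eq {X : Set α} {γ : Ordinal.{u}} (h1 : derivIter X γ = ∅)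
    (h2 : ∀ ζ < γ, (derivIter X ζ).Nonempty) : treeRank X = γ := by
  unfold treeRank
  apply le_antisymm
  · exact csInf_le' (s := {ξ : Ordinal.{u} | derivIter X ξ = ∅}) h1
  · refine le_csInf ⟨γ, h1⟩ fun b hb => ?_
    by_contra h
    push_neg at h
    exact (h2 b h).ne_empty hb

theorem derivIter_nonempty_of_lt_rank (hWF : IsWFTree P) {ζ : Ordinal.{u}}
    (h : ζ < treeRank P) : (derivIter P ζ).Nonempty := by
  unfold treeRank at h
  rw [Set.nonempty_iff_ne_empty]
  intro he
  exact absurd (csInf_le' (s := {ξ : Ordinal.{u} | derivIter P ξ = ∅}) he) (not_le.mpr h)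

theorem statement11' {α : Type u} [PartialOrder α] (P : Set α)
    (hWF : IsWFTree P) :
    (∀ β : Ordinal.{u}, β ≤ treeRank P → treeRank (P \ derivIter P β) = β) ∧
    (∀ β γ : Ordinal.{u}, ∀ t ∈ derivIter P (β + γ),
      (∀ ζ : Ordinal.{u},
        derivIter ({s ∈ P | t < s} ∩ (derivIter P β \ derivIter P (β + γ))) ζ =
          {s ∈ P | t < s} ∩ (derivIter P (β + ζ) \ derivIter P (β + γ))) ∧
      treeRank ({s ∈ P | t < s} ∩ (derivIter P β \ derivIter P (β + γ))) = γ) := by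
  constructor
  · -- part (a)
    intro β hβ
    have hXeq : P \ derivIter P β = P ∩ (derivIter P 0 \ derivIter P β) := by
      rw [derivIter_zero]
      ext x
      constructor
      · exact fun ⟨h1, h2⟩ => ⟨h1, h1, h2⟩
      · exact fun ⟨h1, _, h2⟩ => ⟨h1, h2⟩
    have hform : ∀ ζ : Ordinal.{u}, derivIter (P \ derivIter P β) ζ =
        P ∩ (derivIter P ζ \ derivIter P β) := by
      intro ζ
      rw [hXeq, main_formula hWF (subset_rfl) (fun s u _ _ hu => hu) 0 β ζ, zero_add]
    apply treeRank_eq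
    · rw [hform, Set.diff_self, Set.inter_empty]
    · intro ζ hζ
      rw [hform, Set.nonempty_iff_ne_empty]
      intro he
      -- P^ζ ⊆ P^β, hence P^ζ = P^{ζ+1}
      have hsub : derivIter P ζ ⊆ derivIter P β := by
        intro x hx
        by_contra hxβ
        exact absurd he (Set.nonempty_iff_ne_empty.mp
          ⟨x, derivIter_subset P ζ hx, hx, hxβ⟩)
      have hstep : derivIter P ζ ⊆ derivIter P (ζ + 1) := by
        intro x hx
        exact derivIter_anti P (by
          rw [Ordinal.add_one_eq_succ]; exact Order.succ_le_of_lt hζ) (hsub hx)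
      obtain ⟨s, hs⟩ := derivIter_nonempty_of_lt_rank hWF (lt_of_lt_of_le hζ hβ)
      obtain ⟨u, _, huζ, huζ1⟩ := exC hWF ζ (hstep hs)
      exact huζ1 (hstep huζ)
  · -- part (b)
    intro β γ t ht
    have hAP : {s ∈ P | t < s} ⊆ P := fun s hs => hs.1
    have hA : ∀ ⦃s u : α⦄, s ∈ {s ∈ P | t < s} → s < u → u ∈ P → u ∈ {s ∈ P | t < s} :=
      fun s u hs hlt hu => ⟨hu, hs.2.trans hlt⟩
    have hform := main_formula hWF hAP hA β (β + γ)
    refine ⟨hform, treeRank_eq ?_ ?_⟩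
    · rw [hform, Set.diff_self, Set.inter_empty]
    · intro ζ hζ
      rw [hform]
      have hle : β + ζ + 1 ≤ β + γ := by
        rw [add_assoc, Ordinal.add_one_eq_succ]
        exact (add_le_add_iff_left β).mpr (Order.succ_le_of_lt hζ)
      have ht' : t ∈ derivIter P (β + ζ + 1) := derivIter_anti P hle ht
      obtain ⟨u, hlt, huζ, huζ1⟩ := exC hWF (β + ζ) ht'
      refine ⟨u, ⟨derivIter_subset P _ huζ, hlt⟩, huζ, fun h => huζ1 ?_⟩
      exact derivIter_anti P hle h

end Statement11Aux

/-- for a well-founded tree `P`: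
(a) if `rank(P) ≥ β` then `rank(P \ P^β) = β`;
(b) if `t ∈ P^{β+γ}` then `[P(t) ∩ (P^β \ P^{β+γ})]^ζ = P(t) ∩ (P^{β+ζ} \ P^{β+γ})`
for every `ζ`, and `rank(P(t) ∩ (P^β \ P^{β+γ})) = γ`. -/
theorem statement11 {α : Type u} [PartialOrder α] (P : Set α) (hP : IsTree P)
    (hWF : IsWFTree P) :
    (∀ β : Ordinal.{u}, β ≤ treeRank P → treeRank (P \ derivIter P β) = β) ∧
    (∀ β γ : Ordinal.{u}, ∀ t ∈ derivIter P (β + γ),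
      (∀ ζ : Ordinal.{u},
        derivIter ({s ∈ P | t < s} ∩ (derivIter P β \ derivIter P (β + γ))) ζ =
          {s ∈ P | t < s} ∩ (derivIter P (β + ζ) \ derivIter P (β + γ))) ∧
      treeRank ({s ∈ P | t < s} ∩ (derivIter P β \ derivIter P (β + γ))) = γ) := by
  exact Statement11Aux.statement11' P hWF
end
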